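/- If G is a simple acyclic mixed graph, then G is HTC-identifiable. -/

import Mathlib

open scoped Classical Matrix

/-- A mixed graph `G = (V, D, B)`: a finite vertex set `V`, a set `D` of directed
edges, and a symmetric set `B` of bidirected edges; no self-loops. -/
structure MixedGraph (V : Type*) [Fintype V] [DecidableEq V] where
  D : Finset (V × V)
  B : Finset (V × V)
  B_symm : ∀ v w : V, (v, w) ∈ B → (w, v) ∈ B
  D_irrefl : ∀ v : V, (v, v) ∉ D
  B_irrefl : ∀ v : V, (v, v) ∉ B

namespace MixedGraph

variable {V : Type*} [Fintype V] [DecidableEq V]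

/-- The parents of `v`: nodes `w` with `w → v ∈ D`. -/
def pa (G : MixedGraph V) (v : V) : Finset V :=
  Finset.univ.filter fun w => (w, v) ∈ G.D

/-- The siblings of `v`: nodes `w` with `w ↔ v ∈ B`. -/
def sib (G : MixedGraph V) (v : V) : Finset V :=
  Finset.univ.filter fun w => (w, v) ∈ G.B

/-- A trek: a walk with no colliding arrowheads.  The field `left` lists the nodes of the
left-hand side from top (head) to source (last); `right` lists the nodes of the right-hand
side from top (head) to target (last); consecutive nodes in each list are joined by directed
edges pointing away from the head.  If `hasBidir` then the two heads are joined by a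
bidirected edge, otherwise they coincide (the top node). -/
structure Trek (G : MixedGraph V) where
  left : List V
  right : List V
  left_ne : left ≠ []
  right_ne : right ≠ []
  hasBidir : Bool
  left_chain : left.Chain' fun a b => (a, b) ∈ G.D
  right_chain : right.Chain' fun a b => (a, b) ∈ G.D
  head_cond : if hasBidir then (left.head left_ne, right.head right_ne) ∈ G.B
              else left.head left_ne = right.head right_ne

namespace Trek

variable {G : MixedGraph V}

/-- The source of a trek. -/
def source (π : G.Trek) : V := π.left.getLast π.left_ne

/-- The target of a trek. -/
def target (π : G.Trek) : V := π.right.getLast π.right_ne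

/-- The left-hand side `Left(π)` of a trek, as a set of nodes. -/
def leftSet (π : G.Trek) : Finset V := π.left.toFinset

/-- The right-hand side `Right(π)` of a trek, as a set of nodes. -/
def rightSet (π : G.Trek) : Finset V := π.right.toFinset

/-- A half-trek is a trek whose left-hand side consists of exactly one node. -/
def IsHalfTrek (π : G.Trek) : Prop := π.leftSet.card = 1

/-- The number of directed edges traversed by the trek. -/
def nEdges (π : G.Trek) : ℕ := (π.left.length - 1) + (π.right.length - 1)

end Trek

/-- `htr v`: the set of nodes `w ∉ {v} ∪ sib(v)` reachable from `v` by a half-trek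
containing at least one directed edge. -/
def htr (G : MixedGraph V) (v : V) : Set V :=
  {w | w ≠ v ∧ w ∉ G.sib v ∧
    ∃ π : G.Trek, π.source = v ∧ π.target = w ∧ π.IsHalfTrek ∧ 1 ≤ π.nEdges}

/-- `f` encodes a system of treks from `Y` to `P`: treks with pairwise distinct sources
forming `Y` and pairwise distinct targets forming `P`. -/
def IsTrekSystem (G : MixedGraph V) (Y P : Finset V) (f : V → G.Trek) : Prop :=
  (∀ y ∈ Y, (f y).source = y) ∧
  (Y.image fun y => (f y).target) = P ∧
  ∀ y ∈ Y, ∀ y' ∈ Y, y ≠ y' → (f y).target ≠ (f y').target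

/-- The treks `f y`, `y ∈ Y`, have no sided intersection. -/
def NoSidedIntersection (G : MixedGraph V) (Y : Finset V) (f : V → G.Trek) : Prop :=
  ∀ y ∈ Y, ∀ y' ∈ Y, y ≠ y' →
    Disjoint (f y).leftSet (f y').leftSet ∧ Disjoint (f y).rightSet (f y').rightSet

/-- `Y` satisfies the half-trek criterion with respect to `v`. -/
def SatisfiesHTC (G : MixedGraph V) (v : V) (Y : Finset V) : Prop :=
  Y.card = (G.pa v).card ∧
  (∀ y ∈ Y, y ≠ v ∧ y ∉ G.sib v) ∧
  ∃ f : V → G.Trek, (∀ y ∈ Y, (f y).IsHalfTrek) ∧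
    G.IsTrekSystem Y (G.pa v) f ∧ G.NoSidedIntersection Y f

/-- `Y` satisfies the weak half-trek criterion with respect to `v`. -/
def SatisfiesWeakHTC (G : MixedGraph V) (v : V) (Y : Finset V) : Prop :=
  Y.card = (G.pa v).card ∧
  (∀ y ∈ Y, y ≠ v ∧ y ∉ G.sib v) ∧
  ∃ f : V → G.Trek, (∀ y ∈ Y, y ∈ G.htr v → (f y).IsHalfTrek) ∧
    G.IsTrekSystem Y (G.pa v) f ∧ G.NoSidedIntersection Y f

/-- `G` is HTC-identifiable. -/
def HTCIdentifiable (G : MixedGraph V) : Prop :=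
  ∃ Y : V → Finset V,
    (∀ v, G.SatisfiesHTC v (Y v)) ∧
    ∃ r : V → V → Prop, IsStrictTotalOrder V r ∧
      ∀ v w, w ∈ Y v → w ∈ G.htr v → r w v

/-- `G` is HTC-infinite-to-one. -/
def HTCInfiniteToOne (G : MixedGraph V) : Prop :=
  ∀ Y : V → Finset V,
    (∃ v, ¬ G.SatisfiesHTC v (Y v)) ∨ ∃ v w, v ∈ Y w ∧ w ∈ Y v

/-- `G` is acyclic: no directed cycle can be formed from the edges in `D`. -/
def Acyclic (G : MixedGraph V) : Prop :=
  ∀ v : V, ¬ Relation.TransGen (fun a b => (a, b) ∈ G.D) v v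

/-- `G` is simple: at most one edge between any pair of nodes. -/
def Simple (G : MixedGraph V) : Prop :=
  (∀ e ∈ G.D, e ∉ G.B) ∧ ∀ v w : V, (v, w) ∈ G.D → (w, v) ∉ G.D

/-- `ℝ^D_reg`: real matrices supported on `D` with `I - Λ` invertible. -/
def RDreg (G : MixedGraph V) : Set (Matrix V V ℝ) :=
  {Λ | (∀ v w, (v, w) ∉ G.D → Λ v w = 0) ∧ IsUnit (1 - Λ).det}

/-- `PD(B)`: positive definite symmetric matrices supported on the diagonal and `B`. -/
def PDB (G : MixedGraph V) : Set (Matrix V V ℝ) :=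
  {Ω | Ω.PosDef ∧ ∀ v w, v ≠ w → (v, w) ∉ G.B → Ω v w = 0}

/-- The parameter space `Θ = ℝ^D_reg × PD(B)`. -/
def Theta (G : MixedGraph V) : Set (Matrix V V ℝ × Matrix V V ℝ) :=
  {θ | θ.1 ∈ G.RDreg ∧ θ.2 ∈ G.PDB}

/-- The parametrization `φ(Λ, Ω) = (I-Λ)^{-T} Ω (I-Λ)^{-1}`. -/
noncomputable def phi {R : Type*} [CommRing R] (Λ Ω : Matrix V V R) : Matrix V V R :=
  ((1 - Λ)⁻¹)ᵀ * Ω * (1 - Λ)⁻¹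

/-- Evaluation of a polynomial in the coordinates `λ_vw` (left summand) and `ω_vw`
(right summand) at a parameter point `θ = (Λ, Ω)`. -/
noncomputable def evalParam (θ : Matrix V V ℝ × Matrix V V ℝ)
    (p : MvPolynomial ((V × V) ⊕ (V × V)) ℝ) : ℝ :=
  MvPolynomial.eval (Sum.elim (fun e => θ.1 e.1 e.2) (fun e => θ.2 e.1 e.2)) p

/-- `V₀` is a proper algebraic subset of `Θ`: the intersection with `Θ` of the zero set of a
polynomial in the coordinates that does not vanish identically on `Θ`. -/
def IsProperAlgebraic (G : MixedGraph V)
    (V₀ : Set (Matrix V V ℝ × Matrix V V ℝ)) : Prop :=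
  ∃ p : MvPolynomial ((V × V) ⊕ (V × V)) ℝ,
    (∃ θ ∈ G.Theta, evalParam θ p ≠ 0) ∧
    V₀ = {θ ∈ G.Theta | evalParam θ p = 0}

/-- Evaluation of a polynomial in the entries of a covariance matrix. -/
noncomputable def evalAtCov (S : Matrix V V ℝ) (p : MvPolynomial (V × V) ℝ) : ℝ :=
  MvPolynomial.eval (fun e => S e.1 e.2) p

/-- `G` is rationally identifiable: some rational map `ψ` (each coordinate a quotient of
polynomials in the entries of the covariance matrix) satisfies `ψ ∘ φ_G = id` off a proper
algebraic subset of `Θ`. -/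
def RationallyIdentifiable (G : MixedGraph V) : Prop :=
  ∃ V₀, G.IsProperAlgebraic V₀ ∧
    ∃ p q : ((V × V) ⊕ (V × V)) → MvPolynomial (V × V) ℝ,
      ∀ θ ∈ G.Theta \ V₀,
        (∀ i, evalAtCov (phi θ.1 θ.2) (q i) ≠ 0) ∧
        (∀ v w : V, θ.1 v w * evalAtCov (phi θ.1 θ.2) (q (Sum.inl (v, w)))
            = evalAtCov (phi θ.1 θ.2) (p (Sum.inl (v, w)))) ∧
        (∀ v w : V, θ.2 v w * evalAtCov (phi θ.1 θ.2) (q (Sum.inr (v, w)))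
            = evalAtCov (phi θ.1 θ.2) (p (Sum.inr (v, w))))

/-- `G` is generically identifiable: `φ_G` is injective off a proper algebraic subset. -/
def GenericallyIdentifiable (G : MixedGraph V) : Prop :=
  ∃ V₀, G.IsProperAlgebraic V₀ ∧
    Set.InjOn (fun θ : Matrix V V ℝ × Matrix V V ℝ => phi θ.1 θ.2) (G.Theta \ V₀)

/-- `φ_G` is generically infinite-to-one. -/
def GenInfiniteToOne (G : MixedGraph V) : Prop :=
  ∃ V₀, G.IsProperAlgebraic V₀ ∧
    ∀ θ ∈ G.Theta \ V₀,
      {θ' ∈ G.Theta | phi θ'.1 θ'.2 = phi θ.1 θ.2}.Infinite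

end MixedGraph


/-- The trivial single-node trek at `y`. -/
def MixedGraph.trivTrek {V : Type*} [Fintype V] [DecidableEq V] (G : MixedGraph V)
    (y : V) : G.Trek where
  left := [y]
  right := [y]
  left_ne := by simp
  right_ne := by simp
  hasBidir := false
  left_chain := List.isChain_singleton _
  right_chain := List.isChain_singleton _
  head_cond := by simp

/-- If `G` is a simple acyclic mixed graph, then `G` is HTC-identifiable. -/
theorem simple_acyclic_htc_identifiable {V : Type*} [Fintype V] [DecidableEq V]
    (G : MixedGraph V) (hsimple : G.Simple) (hacyclic : G.Acyclic) :
    G.HTCIdentifiable := by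
  classical
  have hsrc : ∀ y, (G.trivTrek y).source = y := fun y => rfl
  have htgt : ∀ y, (G.trivTrek y).target = y := fun y => rfl
  have hhalf : ∀ y, (G.trivTrek y).IsHalfTrek := fun y => by
    simp [MixedGraph.Trek.IsHalfTrek, MixedGraph.Trek.leftSet, MixedGraph.trivTrek]
  have hleft : ∀ y, (G.trivTrek y).leftSet = {y} := fun y => by
    simp [MixedGraph.Trek.leftSet, MixedGraph.trivTrek]
  have hright : ∀ y, (G.trivTrek y).rightSet = {y} := fun y => by
    simp [MixedGraph.Trek.rightSet, MixedGraph.trivTrek]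
  refine ⟨fun v => G.pa v, ?_, ?_⟩
  · intro v
    refine ⟨rfl, ?_, fun y => G.trivTrek y, fun y _ => hhalf y, ?_, ?_⟩
    · intro y hy
      have hyD : (y, v) ∈ G.D := by
        simpa [MixedGraph.pa] using hy
      constructor
      · intro h; exact G.D_irrefl v (h ▸ hyD)
      · intro hsib
        have : (y, v) ∈ G.B := by simpa [MixedGraph.sib] using hsib
        exact hsimple.1 _ hyD this
    · refine ⟨fun y _ => hsrc y, ?_, ?_⟩
      · have : (fun y => (G.trivTrek y).target) = id := funext htgt
        simp [this]
      · intro y _ y' _ hne h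
        exact hne ((htgt y) ▸ (htgt y') ▸ h)
    · intro y _ y' _ hne
      constructor
      · rw [hleft, hleft]
        exact Finset.disjoint_singleton.mpr hne
      · rw [hright, hright]
        exact Finset.disjoint_singleton.mpr hne
  · -- linear extension of the reachability order
    set p : V → V → Prop := Relation.ReflTransGen (fun a b => (a, b) ∈ G.D) with hp
    haveI : IsPartialOrder V p :=
      { refl := fun a => Relation.ReflTransGen.refl
        trans := fun a b c => Relation.ReflTransGen.trans
        antisymm := by
          intro a b hab hba
          by_contra hne
          have hab' : Relation.TransGen (fun a b => (a, b) ∈ G.D) a b :=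
            (Relation.reflTransGen_iff_eq_or_transGen.mp hab).resolve_left
              (fun h => hne h.symm)
          have : Relation.TransGen (fun a b => (a, b) ∈ G.D) b b :=
            Relation.TransGen.trans_right hba hab'
          exact hacyclic b this }
    obtain ⟨s, hs, hps⟩ := extend_partialOrder p
    haveI := hs
    have htrans : ∀ a b c, s a b → s b c → s a c := fun a b c => IsTrans.trans a b c
    have hanti : ∀ a b, s a b → s b a → a = b := fun a b => Std.Antisymm.antisymm a b
    have htotal : ∀ a b, s a b ∨ s b a := fun a b => Std.Total.total a b
    refine ⟨fun a b => s a b ∧ a ≠ b, ?_, ?_⟩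
    · refine { trichotomous := ?_, irrefl := ?_, trans := ?_ }
      · intro a b h1 h2
        by_contra hne
        rcases htotal a b with h | h
        · exact h1 ⟨h, hne⟩
        · exact h2 ⟨h, Ne.symm hne⟩
      · exact fun a h => h.2 rfl
      · intro a b c hab hbc
        refine ⟨htrans _ _ _ hab.1 hbc.1, ?_⟩
        rintro rfl
        exact hab.2 (hanti _ _ hab.1 hbc.1)
    · intro v w hw _
      have hwD : (w, v) ∈ G.D := by simpa [MixedGraph.pa] using hw
      refine ⟨hps _ _ (Relation.ReflTransGen.single hwD), ?_⟩
      rintro rfl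
      exact G.D_irrefl w hwD
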